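/- arXiv:2602.21090 — 3 statements merged into one kernel-verified Lean document; each statement's English description precedes it below -/
import Mathlib

section
/- For every N ≥ 1, every integer k with 0 ≤ k ≤ N−1, and every β ∈ (0,1), the polynomial equation (β/N) · Σ_{m=k}^{N−1} C(m,k) t^{m−k} − C(N,k) t^{N−k} = 0 has exactly one solution t(k) in the interval [0,1], and this solution lies in (0,1). -/
/-- The polynomial (in `t`) appearing in the definition of the scenario-approach
violation function: `(β/N) · Σ_{m=k}^{N−1} C(m,k) t^{m−k} − C(N,k) t^{N−k}`. -/
noncomputable def scenPoly (N : ℕ) (β : ℝ) (k : ℕ) (t : ℝ) : ℝ :=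
  (β / N) * ∑ m ∈ Finset.Ico k N, (m.choose k : ℝ) * t ^ (m - k)
    - (N.choose k : ℝ) * t ^ (N - k)

/-- For every `N ≥ 1`, every `0 ≤ k ≤ N−1` and every `β ∈ (0,1)`, the equation
`scenPoly N β k t = 0` has exactly one solution in `[0,1]`, and this solution
lies in the open interval `(0,1)`. -/
theorem stmt_0 (N : ℕ) (hN : 1 ≤ N) (k : ℕ) (hk : k ≤ N - 1) (β : ℝ)
    (hβ : β ∈ Set.Ioo (0 : ℝ) 1) :
    ∃ t : ℝ, t ∈ Set.Ioo (0 : ℝ) 1 ∧ scenPoly N β k t = 0 ∧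
      ∀ t' ∈ Set.Icc (0 : ℝ) 1, scenPoly N β k t' = 0 → t' = t := by
  obtain ⟨hβ0, hβ1⟩ := hβ
  have hkN : k < N := by omega
  have hNpos : (0:ℝ) < N := by exact_mod_cast hN
  have hchoosepos : (0:ℝ) < (N.choose k : ℝ) := by
    exact_mod_cast Nat.choose_pos hkN.le
  -- value at 0
  have hf0 : 0 < scenPoly N β k 0 := by
    have hsum : ∑ m ∈ Finset.Ico k N, (m.choose k : ℝ) * (0:ℝ) ^ (m - k) = 1 := by
      rw [Finset.sum_eq_single k]
      · simp
      · intro m hm hmk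
        simp only [Finset.mem_Ico] at hm
        rw [zero_pow (by omega)]
        ring
      · intro h
        exact absurd (Finset.mem_Ico.mpr ⟨le_refl k, hkN⟩) h
    unfold scenPoly
    rw [hsum, zero_pow (by omega)]
    have : β / N > 0 := by positivity
    nlinarith
  -- value at 1
  have hf1 : scenPoly N β k 1 < 0 := by
    have hsum : ∑ m ∈ Finset.Ico k N, (m.choose k : ℝ) * (1:ℝ) ^ (m - k)
        = (N.choose (k+1) : ℝ) := by
      simp only [one_pow, mul_one]
      rw [← Nat.cast_sum]
      congr 1
      have h1 : Finset.Ico k N = Finset.Icc k (N-1) := by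
        congr 1; omega
      rw [h1, Nat.sum_Icc_choose]
      congr 1; omega
    have hle : (N.choose (k+1) : ℝ) ≤ (N : ℝ) * (N.choose k : ℝ) := by
      have h2 : N.choose (k+1) * (k+1) = N.choose k * (N - k) := by
        exact_mod_cast Nat.choose_succ_right_eq N k
      have h3 : N.choose (k+1) ≤ N.choose (k+1) * (k+1) := Nat.le_mul_of_pos_right _ (by omega)
      have h4 : N.choose k * (N - k) ≤ N.choose k * N := Nat.mul_le_mul_left _ (by omega)
      have h5 : N.choose (k+1) ≤ N.choose k * N := h3.trans (h2 ▸ h4)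
      have : N.choose (k+1) ≤ N * N.choose k := by rw [Nat.mul_comm]; exact h5
      exact_mod_cast this
    unfold scenPoly
    rw [hsum, one_pow, mul_one]
    have h5 : β / N * (N.choose (k+1) : ℝ) ≤ β / N * ((N:ℝ) * (N.choose k : ℝ)) := by
      apply mul_le_mul_of_nonneg_left hle (by positivity)
    have h6 : β / N * ((N:ℝ) * (N.choose k : ℝ)) = β * (N.choose k : ℝ) := by
      field_simp
    nlinarith
  -- continuity
  have hcont : ContinuousOn (scenPoly N β k) (Set.Icc 0 1) := by
    apply Continuous.continuousOn
    unfold scenPoly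
    fun_prop
  -- existence via IVT
  have hIVT := intermediate_value_Ioo' (le_of_lt zero_lt_one) hcont
  have h0mem : (0:ℝ) ∈ Set.Ioo (scenPoly N β k 1) (scenPoly N β k 0) := ⟨hf1, hf0⟩
  obtain ⟨t, ht, hroot⟩ := hIVT h0mem
  -- key: factorization through strictly decreasing function
  have hψ : ∀ s : ℝ, 0 < s → scenPoly N β k s
      = s ^ (N - k) * ((β / N) * ∑ m ∈ Finset.Ico k N, (m.choose k : ℝ) * (s ^ (N - m))⁻¹
        - (N.choose k : ℝ)) := by
    intro s hs
    have h1 : ∀ m ∈ Finset.Ico k N, (m.choose k : ℝ) * s ^ (m - k)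
        = (m.choose k : ℝ) * (s ^ (N - k) * (s ^ (N - m))⁻¹) := by
      intro m hm
      simp only [Finset.mem_Ico] at hm
      have hpow : s ^ (N - k) = s ^ (m - k) * s ^ (N - m) := by
        rw [← pow_add]; congr 1; omega
      rw [hpow]
      have : s ^ (N - m) ≠ 0 := pow_ne_zero _ hs.ne'
      field_simp
    unfold scenPoly
    rw [Finset.sum_congr rfl h1, mul_sub]
    congr 1
    · simp only [Finset.mul_sum]
      exact Finset.sum_congr rfl fun m hm => by ring
    · rw [mul_comm]
  have key : ∀ a b : ℝ, 0 < a → a < b →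
      scenPoly N β k a = 0 → scenPoly N β k b = 0 → False := by
    intro a b ha hab hfa hfb
    have hb : 0 < b := ha.trans hab
    have ra := hψ a ha
    have rb := hψ b hb
    rw [hfa] at ra
    rw [hfb] at rb
    have hao : (β / N) * ∑ m ∈ Finset.Ico k N, (m.choose k : ℝ) * (a ^ (N - m))⁻¹
        - (N.choose k : ℝ) = 0 := by
      have := pow_ne_zero (N - k) ha.ne'
      rcases mul_eq_zero.mp ra.symm with h | h
      · exact absurd h this
      · exact h
    have hbo : (β / N) * ∑ m ∈ Finset.Ico k N, (m.choose k : ℝ) * (b ^ (N - m))⁻¹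
        - (N.choose k : ℝ) = 0 := by
      have := pow_ne_zero (N - k) hb.ne'
      rcases mul_eq_zero.mp rb.symm with h | h
      · exact absurd h this
      · exact h
    have hsum : ∑ m ∈ Finset.Ico k N, (m.choose k : ℝ) * (b ^ (N - m))⁻¹
        < ∑ m ∈ Finset.Ico k N, (m.choose k : ℝ) * (a ^ (N - m))⁻¹ := by
      apply Finset.sum_lt_sum_of_nonempty
      · exact ⟨k, Finset.mem_Ico.mpr ⟨le_refl k, hkN⟩⟩
      · intro m hm
        simp only [Finset.mem_Ico] at hm
        have hcm : (0:ℝ) < (m.choose k : ℝ) := by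
          exact_mod_cast Nat.choose_pos hm.1
        apply mul_lt_mul_of_pos_left _ hcm
        apply inv_strictAnti₀ (by positivity)
        exact pow_lt_pow_left₀ hab ha.le (by omega)
    have hβN : (0:ℝ) < β / N := by positivity
    nlinarith
  refine ⟨t, ht, hroot, ?_⟩
  intro t' ht' hroot'
  have ht'0 : 0 < t' := by
    rcases lt_or_eq_of_le ht'.1 with h | h
    · exact h
    · exfalso; rw [← h] at hroot'; linarith
  rcases lt_trichotomy t' t with h | h | h
  · exact (key t' t ht'0 h hroot' hroot).elim
  · exact h
  · exact (key t t' ht.1 h hroot hroot').elim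
end

section
/- For every N ≥ 1 and β ∈ (0,1), the function ε_{N,β} is non-decreasing: for all integers k, k' with 0 ≤ k ≤ k' ≤ N, ε_{N,β}(k) ≤ ε_{N,β}(k'). -/
lemma scenPoly_zero (N : ℕ) (β : ℝ) (k : ℕ) (hk : k < N) :
    scenPoly N β k 0 = β / N := by
  unfold scenPoly
  rw [Finset.sum_eq_single_of_mem k (Finset.mem_Ico.2 ⟨le_refl k, hk⟩)]
  · rw [zero_pow (by omega : N - k ≠ 0)]
    simp
  · intro m hm hne
    rcases Finset.mem_Ico.1 hm with ⟨h1, h2⟩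
    rw [zero_pow (by omega : m - k ≠ 0), mul_zero]

lemma t_pos {N k : ℕ} {β t : ℝ} (hk : k < N) (hβ : 0 < β)
    (ht0 : 0 ≤ t) (hroot : scenPoly N β k t = 0) : 0 < t := by
  rcases ht0.lt_or_eq with h | h
  · exact h
  · exfalso
    rw [← h, scenPoly_zero N β k hk] at hroot
    have hN : (0:ℝ) < N := by
      have : 0 < N := by omega
      exact_mod_cast this
    have : 0 < β / N := div_pos hβ hN
    linarith

lemma scenPoly_pos_of_lt {N k : ℕ} {β s u : ℝ} (hk : k < N) (hβ : 0 < β)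
    (hs : 0 < s) (hsu : s < u) (hu1 : u ≤ 1)
    (hu : 0 ≤ scenPoly N β k u) : 0 < scenPoly N β k s := by
  have hu0 : 0 < u := hs.trans hsu
  have hN : (0:ℝ) < N := by
    have : 0 < N := by omega
    exact_mod_cast this
  have hb : 0 < β / N := div_pos hβ hN
  set A := ∑ m ∈ Finset.Ico k N, (m.choose k : ℝ) * s ^ (m - k) with hA
  set B := ∑ m ∈ Finset.Ico k N, (m.choose k : ℝ) * u ^ (m - k) with hB
  have hP : (0:ℝ) < s ^ (N-1-k) := pow_pos hs _
  have hQ : (0:ℝ) < u ^ (N-1-k) := pow_pos hu0 _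
  have hc : (0:ℝ) < (N.choose k : ℝ) := by
    exact_mod_cast Nat.choose_pos hk.le
  -- sum comparison: B * s^(N-1-k) ≤ A * u^(N-1-k)
  have fact1 : B * s ^ (N-1-k) ≤ A * u ^ (N-1-k) := by
    rw [hA, hB, Finset.sum_mul, Finset.sum_mul]
    apply Finset.sum_le_sum
    intro m hm
    rcases Finset.mem_Ico.1 hm with ⟨hkm, hmN⟩
    have e1 : N - 1 - k = (m - k) + (N - 1 - m) := by omega
    have hpw : s ^ (N-1-m) ≤ u ^ (N-1-m) := pow_le_pow_left₀ hs.le hsu.le _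
    have key : u ^ (m-k) * s ^ (N-1-k) ≤ s ^ (m-k) * u ^ (N-1-k) := by
      calc u ^ (m-k) * s ^ (N-1-k)
          = (u ^ (m-k) * s ^ (m-k)) * s ^ (N-1-m) := by rw [e1, pow_add]; ring
        _ ≤ (u ^ (m-k) * s ^ (m-k)) * u ^ (N-1-m) := by
            apply mul_le_mul_of_nonneg_left hpw (by positivity)
        _ = s ^ (m-k) * u ^ (N-1-k) := by rw [e1, pow_add]; ring
    have hcm : (0:ℝ) ≤ (m.choose k : ℝ) := Nat.cast_nonneg _
    calc (m.choose k : ℝ) * u ^ (m-k) * s ^ (N-1-k)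
        = (m.choose k : ℝ) * (u ^ (m-k) * s ^ (N-1-k)) := by ring
      _ ≤ (m.choose k : ℝ) * (s ^ (m-k) * u ^ (N-1-k)) :=
          mul_le_mul_of_nonneg_left key hcm
      _ = (m.choose k : ℝ) * s ^ (m-k) * u ^ (N-1-k) := by ring
  have fact2 : (N.choose k : ℝ) * u ^ (N-k) ≤ (β/N) * B := by
    have : scenPoly N β k u = (β/N) * B - (N.choose k : ℝ) * u ^ (N-k) := rfl
    linarith [hu.trans_eq this]
  have epow : ∀ x : ℝ, x ^ (N-k) = x ^ (N-1-k) * x := by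
    intro x
    have : N - k = (N-1-k) + 1 := by omega
    rw [this, pow_succ]
  -- chain
  have chain : (N.choose k : ℝ) * s ^ (N-k) * u ^ (N-1-k) < ((β/N) * A) * u ^ (N-1-k) := by
    have c1 : (N.choose k : ℝ) * s ^ (N-k) * u ^ (N-1-k)
        < (N.choose k : ℝ) * u ^ (N-k) * s ^ (N-1-k) := by
      rw [epow s, epow u]
      have base : (0:ℝ) < (N.choose k : ℝ) * (s ^ (N-1-k) * u ^ (N-1-k)) := by positivity
      nlinarith
    have c2 : (N.choose k : ℝ) * u ^ (N-k) * s ^ (N-1-k) ≤ ((β/N) * B) * s ^ (N-1-k) :=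
      mul_le_mul_of_nonneg_right fact2 hP.le
    have c3 : ((β/N) * B) * s ^ (N-1-k) ≤ ((β/N) * A) * u ^ (N-1-k) := by
      have := mul_le_mul_of_nonneg_left fact1 hb.le
      nlinarith
    linarith
  have main : (N.choose k : ℝ) * s ^ (N-k) < (β/N) * A :=
    lt_of_mul_lt_mul_right chain hQ.le
  have : scenPoly N β k s = (β/N) * A - (N.choose k : ℝ) * s ^ (N-k) := rfl
  linarith [this]

lemma choose_mul_le {N m k : ℕ} (hm : m ≤ N) :
    N.choose k * m.choose (k+1) ≤ N.choose (k+1) * m.choose k := by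
  have h1 := Nat.choose_succ_right_eq m k
  have h2 := Nat.choose_succ_right_eq N k
  have hmul : N.choose k * m.choose (k+1) * (k+1) ≤ N.choose (k+1) * m.choose k * (k+1) := by
    calc N.choose k * m.choose (k+1) * (k+1)
        = N.choose k * (m.choose (k+1) * (k+1)) := by ring
      _ = N.choose k * (m.choose k * (m - k)) := by rw [h1]
      _ ≤ N.choose k * (m.choose k * (N - k)) := by
          apply Nat.mul_le_mul_left
          apply Nat.mul_le_mul_left
          omega
      _ = (N.choose (k+1) * (k+1)) * m.choose k := by rw [h2]; ring
      _ = N.choose (k+1) * m.choose k * (k+1) := by ring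
  exact Nat.le_of_mul_le_mul_right hmul (Nat.succ_pos k)

lemma scenPoly_succ_nonpos {N k : ℕ} {β t : ℝ} (hk : k + 1 < N) (hβ : 0 < β)
    (ht : 0 < t) (hroot : scenPoly N β k t = 0) :
    scenPoly N β (k+1) t ≤ 0 := by
  have hN : (0:ℝ) < N := by
    have : 0 < N := by omega
    exact_mod_cast this
  have hb : 0 < β / N := div_pos hβ hN
  have hc : (0:ℝ) < (N.choose k : ℝ) := by
    exact_mod_cast Nat.choose_pos (by omega : k ≤ N)
  set X := ∑ m ∈ Finset.Ico (k+1) N, (m.choose (k+1) : ℝ) * t ^ (m - (k+1)) with hX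
  set Y := ∑ m ∈ Finset.Ico k N, (m.choose k : ℝ) * t ^ (m - k) with hY
  have S1 : t * X = ∑ m ∈ Finset.Ico (k+1) N, (m.choose (k+1) : ℝ) * t ^ (m - k) := by
    rw [hX, Finset.mul_sum]
    apply Finset.sum_congr rfl
    intro m hm
    rcases Finset.mem_Ico.1 hm with ⟨h1, h2⟩
    have e : m - k = (m - (k+1)) + 1 := by omega
    rw [e, pow_succ]
    ring
  have S2 : t * t ^ (N - (k+1)) = t ^ (N - k) := by
    have e : N - k = (N - (k+1)) + 1 := by omega
    rw [e, pow_succ]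
    ring
  -- key sum inequality
  have Ssum : (N.choose k : ℝ) * (t * X) ≤ (N.choose (k+1) : ℝ) * Y := by
    rw [S1, hY, Finset.mul_sum, Finset.mul_sum]
    calc ∑ m ∈ Finset.Ico (k+1) N, (N.choose k : ℝ) * ((m.choose (k+1) : ℝ) * t ^ (m - k))
        ≤ ∑ m ∈ Finset.Ico (k+1) N, (N.choose (k+1) : ℝ) * ((m.choose k : ℝ) * t ^ (m - k)) := by
          apply Finset.sum_le_sum
          intro m hm
          rcases Finset.mem_Ico.1 hm with ⟨h1, h2⟩
          have hch : (N.choose k * m.choose (k+1) : ℝ) ≤ (N.choose (k+1) * m.choose k : ℝ) := by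
            exact_mod_cast choose_mul_le (le_of_lt h2)
          have hpw : (0:ℝ) ≤ t ^ (m - k) := by positivity
          calc (N.choose k : ℝ) * ((m.choose (k+1) : ℝ) * t ^ (m - k))
              = ((N.choose k : ℝ) * (m.choose (k+1) : ℝ)) * t ^ (m - k) := by ring
            _ ≤ ((N.choose (k+1) : ℝ) * (m.choose k : ℝ)) * t ^ (m - k) := by
                apply mul_le_mul_of_nonneg_right _ hpw
                exact_mod_cast hch
            _ = (N.choose (k+1) : ℝ) * ((m.choose k : ℝ) * t ^ (m - k)) := by ring
      _ ≤ ∑ m ∈ Finset.Ico k N, (N.choose (k+1) : ℝ) * ((m.choose k : ℝ) * t ^ (m - k)) := by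
          apply Finset.sum_le_sum_of_subset_of_nonneg
          · apply Finset.Ico_subset_Ico (by omega) le_rfl
          · intro m _ _
            positivity
  have hmul : ((N.choose k : ℝ) * t) * scenPoly N β (k+1) t
      ≤ (N.choose (k+1) : ℝ) * scenPoly N β k t := by
    have e1 : scenPoly N β (k+1) t = (β/N) * X - (N.choose (k+1) : ℝ) * t ^ (N - (k+1)) := rfl
    have e2 : scenPoly N β k t = (β/N) * Y - (N.choose k : ℝ) * t ^ (N - k) := rfl
    rw [e1, e2]
    have expand : ((N.choose k : ℝ) * t) * ((β/N) * X - (N.choose (k+1) : ℝ) * t ^ (N - (k+1)))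
        = (β/N) * ((N.choose k : ℝ) * (t * X))
          - (N.choose k : ℝ) * (N.choose (k+1) : ℝ) * (t * t ^ (N - (k+1))) := by ring
    rw [expand, S2]
    have := mul_le_mul_of_nonneg_left Ssum hb.le
    nlinarith
  rw [hroot, mul_zero] at hmul
  have hpos : (0:ℝ) < (N.choose k : ℝ) * t := mul_pos hc ht
  nlinarith

/-- For every `N ≥ 1` and `β ∈ (0,1)`, the scenario-approach violation function
`ε_{N,β}` (defined by `ε_{N,β}(N) = 1` and `ε_{N,β}(k) = 1 − t(k)` for `k < N`,
where `t(k)` is the unique solution in `[0,1]` of the polynomial equation) is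
non-decreasing on `{0,1,…,N}`. -/
theorem stmt_1 (N : ℕ) (hN : 1 ≤ N) (β : ℝ) (hβ : β ∈ Set.Ioo (0 : ℝ) 1)
    (t : ℕ → ℝ)
    (ht : ∀ k < N, t k ∈ Set.Icc (0 : ℝ) 1 ∧ scenPoly N β k (t k) = 0)
    (eps : ℕ → ℝ)
    (hepsN : eps N = 1)
    (heps : ∀ k < N, eps k = 1 - t k) :
    ∀ k k' : ℕ, k ≤ k' → k' ≤ N → eps k ≤ eps k' := by
  obtain ⟨hβ0, hβ1⟩ := hβ
  have step : ∀ j, j + 1 < N → t (j+1) ≤ t j := by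
    intro j hj
    obtain ⟨⟨htj0, htj1⟩, hrj⟩ := ht j (by omega)
    obtain ⟨⟨htj0', htj1'⟩, hrj'⟩ := ht (j+1) hj
    have htjpos : 0 < t j := t_pos (by omega) hβ0 htj0 hrj
    by_contra hcon
    push_neg at hcon
    have hnp := scenPoly_succ_nonpos hj hβ0 htjpos hrj
    have hp := scenPoly_pos_of_lt hj hβ0 htjpos hcon htj1' (le_of_eq hrj'.symm)
    linarith
  have mono : ∀ d k, k + d < N → t (k + d) ≤ t k := by
    intro d
    induction d with
    | zero => intro k _; simp
    | succ d ih =>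
        intro k hk
        have e : k + (d + 1) = (k + d) + 1 := by omega
        rw [e]
        calc t ((k + d) + 1) ≤ t (k + d) := step _ (by omega)
          _ ≤ t k := ih k (by omega)
  intro k k' hkk' hk'N
  rcases eq_or_lt_of_le hk'N with hEq | hlt
  · rcases eq_or_lt_of_le hkk' with h | h
    · rw [h]
    · rw [hEq, hepsN, heps k (by omega)]
      have := (ht k (by omega)).1.1
      linarith
  · rw [heps k (by omega), heps k' hlt]
    have hmono := mono (k' - k) k (by omega)
    have e : k + (k' - k) = k' := by omega
    rw [e] at hmono
    linarith
end

section
/- (Remark 3, tightness of the a priori guarantee.) For all integers 1 ≤ q ≤ N and every β ∈ (0,1), the value ε_{N,β}(q) satisfies Σ_{m=0}^{q−1} C(N,m) ε_{N,β}(q)^m (1 − ε_{N,β}(q))^{N−m} ≤ β; consequently, every ε that is the smallest value in (0,1) satisfying Σ_{m=0}^{q−1} C(N,m) ε^m (1−ε)^{N−m} ≤ β satisfies ε ≤ ε_{N,β}(q). -/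
open Finset

/-- One-step log-concavity of a binomial row. -/
lemma choose_mul_step (N m j : ℕ) (hmj : m < j) (hjN : j ≤ N) :
    N.choose m * N.choose j ≤ N.choose (m + 1) * N.choose (j - 1) := by
  obtain ⟨j', rfl⟩ : ∃ j', j = j' + 1 := ⟨j - 1, by omega⟩
  simp only [Nat.add_sub_cancel]
  have h1 := Nat.choose_succ_right_eq N m
  have h2 := Nat.choose_succ_right_eq N j'
  have hpos : 0 < (m + 1) * (N - j') := Nat.mul_pos (by omega) (by omega)
  refine Nat.le_of_mul_le_mul_right ?_ hpos
  calc N.choose m * N.choose (j' + 1) * ((m + 1) * (N - j'))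
      ≤ N.choose m * N.choose (j' + 1) * ((j' + 1) * (N - m)) := by
        exact Nat.mul_le_mul_left _ (Nat.mul_le_mul (by omega) (by omega))
    _ = (N.choose m * (N - m)) * (N.choose (j' + 1) * (j' + 1)) := by ring
    _ = (N.choose (m + 1) * (m + 1)) * (N.choose j' * (N - j')) := by rw [h1, h2]
    _ = N.choose (m + 1) * N.choose j' * ((m + 1) * (N - j')) := by ring

/-- Interval log-concavity: bringing the indices together increases the product. -/
lemma choose_mul_pair (N : ℕ) :
    ∀ k m j q b : ℕ, m + k = q → m + j = q + b → m ≤ b →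
      N.choose m * N.choose j ≤ N.choose q * N.choose b := by
  intro k
  induction k with
  | zero =>
    intro m j q b h1 h2 h3
    obtain rfl : m = q := by omega
    obtain rfl : j = b := by omega
    exact le_rfl
  | succ k ih =>
    intro m j q b h1 h2 h3
    rcases eq_or_lt_of_le h3 with heq | hmb
    · obtain rfl : j = q := by omega
      subst heq
      exact (mul_comm _ _).le
    · by_cases hjN : j ≤ N
      · exact le_trans (choose_mul_step N m j (by omega) hjN)
          (ih (m + 1) (j - 1) q b (by omega) (by omega) (by omega))
      · have : N.choose j = 0 := Nat.choose_eq_zero_of_lt (by omega)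
        simp [this]

/-- Fiberwise coefficient bound. -/
lemma fiber_bound (N q n b : ℕ) (hN : N = q + n + 1) :
    ∑ p ∈ (Finset.range q ×ˢ Finset.range (n + 1)).filter (fun p => p.1 + p.2 = b),
      N.choose p.1 * N.choose (q + 1 + p.2) ≤ N * N.choose q * (N - 1).choose b := by
  classical
  set s := (Finset.range q ×ˢ Finset.range (n + 1)).filter (fun p => p.1 + p.2 = b) with hs
  have hterm : ∀ p ∈ s, N.choose p.1 * N.choose (q + 1 + p.2) ≤ N.choose q * N.choose (b + 1) := by
    intro p hp
    simp only [hs, Finset.mem_filter, Finset.mem_product, Finset.mem_range] at hp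
    exact choose_mul_pair N (q - p.1) p.1 (q + 1 + p.2) q (b + 1) (by omega) (by omega) (by omega)
  have hcard : s.card ≤ b + 1 := by
    have : s.card ≤ (Finset.range (b + 1)).card := by
      apply Finset.card_le_card_of_injOn (fun p => p.1)
      · intro p hp
        simp only [hs, Finset.mem_coe, Finset.mem_filter, Finset.mem_product, Finset.mem_range] at hp
        simp only [Finset.mem_coe, Finset.mem_range]
        omega
      · intro p hp p' hp' hpp
        simp only [hs, Finset.coe_filter, Set.mem_setOf_eq, Finset.mem_coe,
          Finset.mem_product, Finset.mem_range] at hp hp'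
        have hpp' : p.1 = p'.1 := hpp
        ext
        · exact hpp'
        · omega
    simpa using this
  calc ∑ p ∈ s, N.choose p.1 * N.choose (q + 1 + p.2)
      ≤ s.card • (N.choose q * N.choose (b + 1)) := Finset.sum_le_card_nsmul _ _ _ hterm
    _ = s.card * (N.choose q * N.choose (b + 1)) := by simp [smul_eq_mul]
    _ ≤ (b + 1) * (N.choose q * N.choose (b + 1)) := Nat.mul_le_mul_right _ hcard
    _ = N.choose q * (N.choose (b + 1) * (b + 1)) := by ring
    _ = N * N.choose q * (N - 1).choose b := by
        have h := Nat.add_one_mul_choose_eq (N - 1) b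
        have hN1 : N - 1 + 1 = N := by omega
        simp only [Nat.succ_eq_add_one, hN1] at h
        rw [← h]
        ring

/-- The key polynomial identity rewriting the negative-binomial-type sum. -/
lemma ident (q : ℕ) (t : ℝ) (n : ℕ) :
    ∑ i ∈ Finset.range (n + 1), ((q + i).choose q : ℝ) * t ^ i
      = ∑ i ∈ Finset.range (n + 1),
          ((q + 1 + n).choose (q + 1 + i) : ℝ) * (1 - t) ^ i * t ^ (n - i) := by
  induction n with
  | zero => simp
  | succ n ih =>
    rw [Finset.sum_range_succ]
    have pascal : ∀ i : ℕ, ((q + 1 + (n + 1)).choose (q + 1 + i) : ℝ)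
        = ((q + 1 + n).choose (q + i) : ℝ) + ((q + 1 + n).choose (q + 1 + i) : ℝ) := by
      intro i
      have h : (q + 1 + (n + 1)).choose (q + 1 + i)
          = (q + 1 + n).choose (q + i) + (q + 1 + n).choose (q + 1 + i) := by
        have h0 : q + 1 + (n + 1) = (q + 1 + n) + 1 := by omega
        have h1 : q + 1 + i = (q + i) + 1 := by omega
        rw [h0, h1, Nat.choose_succ_succ]
      exact_mod_cast congrArg (Nat.cast : ℕ → ℝ) h
    have hsplit : ∑ i ∈ Finset.range (n + 2),
          ((q + 1 + (n + 1)).choose (q + 1 + i) : ℝ) * (1 - t) ^ i * t ^ (n + 1 - i)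
        = (∑ i ∈ Finset.range (n + 2),
            ((q + 1 + n).choose (q + i) : ℝ) * (1 - t) ^ i * t ^ (n + 1 - i))
          + ∑ i ∈ Finset.range (n + 2),
            ((q + 1 + n).choose (q + 1 + i) : ℝ) * (1 - t) ^ i * t ^ (n + 1 - i) := by
      rw [← Finset.sum_add_distrib]
      refine Finset.sum_congr rfl fun i _ => ?_
      rw [pascal i]; ring
    have hB : ∑ i ∈ Finset.range (n + 2),
          ((q + 1 + n).choose (q + 1 + i) : ℝ) * (1 - t) ^ i * t ^ (n + 1 - i)
        = t * ∑ i ∈ Finset.range (n + 1),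
            ((q + 1 + n).choose (q + 1 + i) : ℝ) * (1 - t) ^ i * t ^ (n - i) := by
      rw [Finset.sum_range_succ]
      have hz : (q + 1 + n).choose (q + 1 + (n + 1)) = 0 :=
        Nat.choose_eq_zero_of_lt (by omega)
      rw [hz]
      rw [Finset.mul_sum]
      simp only [Nat.cast_zero, zero_mul, add_zero]
      refine Finset.sum_congr rfl fun i hi => ?_
      have hi' : i < n + 1 := Finset.mem_range.mp hi
      have hpow : t ^ (n + 1 - i) = t * t ^ (n - i) := by
        rw [← pow_succ']
        congr 1
        omega
      rw [hpow]; ring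
    have hA : ∑ i ∈ Finset.range (n + 2),
          ((q + 1 + n).choose (q + i) : ℝ) * (1 - t) ^ i * t ^ (n + 1 - i)
        = ((q + 1 + n).choose q : ℝ) * t ^ (n + 1)
          + (1 - t) * ∑ i ∈ Finset.range (n + 1),
              ((q + 1 + n).choose (q + 1 + i) : ℝ) * (1 - t) ^ i * t ^ (n - i) := by
      rw [Finset.sum_range_succ']
      simp only [add_zero, pow_zero, mul_one, Nat.sub_zero]
      rw [Finset.mul_sum]
      rw [add_comm]
      congr 1
      refine Finset.sum_congr rfl fun i hi => ?_
      have h1 : q + (i + 1) = q + 1 + i := by omega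
      have h2 : n + 1 - (i + 1) = n - i := by omega
      rw [h1, h2]; ring
    rw [hsplit, hA, hB, ← ih]
    have hc : ((q + (n + 1)).choose q : ℝ) = ((q + 1 + n).choose q : ℝ) := by
      norm_cast
      congr 1
      omega
    rw [hc]
    ring

/-- The central polynomial inequality:  `F(t) · H(t) ≤ N · C(N,q) · t^{N-q}`. -/
lemma key_ineq (N q n : ℕ) (hN : N = q + n + 1) (ε t : ℝ) (hε : 0 ≤ ε) (ht : 0 ≤ t)
    (hεt : ε + t = 1) :
    (∑ m ∈ Finset.range q, (N.choose m : ℝ) * ε ^ m * t ^ (N - m)) *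
      (∑ i ∈ Finset.range (n + 1), (N.choose (q + 1 + i) : ℝ) * ε ^ i * t ^ (n - i))
      ≤ (N : ℝ) * (N.choose q : ℝ) * t ^ (n + 1) := by
  classical
  have hmaps : ∀ p ∈ Finset.range q ×ˢ Finset.range (n + 1),
      (fun p : ℕ × ℕ => p.1 + p.2) p ∈ Finset.range N := by
    intro p hp
    simp only [Finset.mem_product, Finset.mem_range] at hp ⊢
    omega
  have hLHS : (∑ m ∈ Finset.range q, (N.choose m : ℝ) * ε ^ m * t ^ (N - m)) *
      (∑ i ∈ Finset.range (n + 1), (N.choose (q + 1 + i) : ℝ) * ε ^ i * t ^ (n - i))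
      = ∑ b ∈ Finset.range N,
          ∑ p ∈ (Finset.range q ×ˢ Finset.range (n + 1)).filter
              (fun p => p.1 + p.2 = b),
            ((N.choose p.1 : ℝ) * ε ^ p.1 * t ^ (N - p.1)) *
              ((N.choose (q + 1 + p.2) : ℝ) * ε ^ p.2 * t ^ (n - p.2)) := by
    rw [Finset.sum_mul_sum, ← Finset.sum_product']
    exact (Finset.sum_fiberwise_of_maps_to hmaps _).symm
  rw [hLHS]
  have hRHS : (N : ℝ) * (N.choose q : ℝ) * t ^ (n + 1)
      = ∑ b ∈ Finset.range N,
          ((N : ℝ) * (N.choose q : ℝ) * ((N - 1).choose b : ℝ)) * (ε ^ b * t ^ (N + n - b)) := by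
    have hone : (1 : ℝ) = (ε + t) ^ (N - 1) := by rw [hεt]; simp
    calc (N : ℝ) * (N.choose q : ℝ) * t ^ (n + 1)
        = (N : ℝ) * (N.choose q : ℝ) * t ^ (n + 1) * (ε + t) ^ (N - 1) := by
          rw [← hone]; ring
      _ = (N : ℝ) * (N.choose q : ℝ) * t ^ (n + 1) *
            ∑ b ∈ Finset.range (N - 1 + 1), ε ^ b * t ^ (N - 1 - b) * ((N - 1).choose b : ℝ) := by
          rw [add_pow]
      _ = _ := by
          have hN1 : N - 1 + 1 = N := by omega
          rw [hN1, Finset.mul_sum]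
          refine Finset.sum_congr rfl fun b hb => ?_
          have hb' : b < N := Finset.mem_range.mp hb
          have hpow : t ^ (n + 1) * t ^ (N - 1 - b) = t ^ (N + n - b) := by
            rw [← pow_add]
            congr 1
            omega
          rw [← hpow]; ring
  rw [hRHS]
  refine Finset.sum_le_sum fun b hb => ?_
  have hb' : b < N := Finset.mem_range.mp hb
  have hinner : ∑ p ∈ (Finset.range q ×ˢ Finset.range (n + 1)).filter
        (fun p => p.1 + p.2 = b),
      ((N.choose p.1 : ℝ) * ε ^ p.1 * t ^ (N - p.1)) *
        ((N.choose (q + 1 + p.2) : ℝ) * ε ^ p.2 * t ^ (n - p.2))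
      = (((∑ p ∈ (Finset.range q ×ˢ Finset.range (n + 1)).filter
            (fun p => p.1 + p.2 = b),
          N.choose p.1 * N.choose (q + 1 + p.2) : ℕ)) : ℝ) * (ε ^ b * t ^ (N + n - b)) := by
    push_cast
    rw [Finset.sum_mul]
    refine Finset.sum_congr rfl fun p hp => ?_
    simp only [Finset.mem_filter, Finset.mem_product, Finset.mem_range] at hp
    obtain ⟨⟨hp1, hp2⟩, hpb⟩ := hp
    have he : ε ^ p.1 * ε ^ p.2 = ε ^ b := by rw [← pow_add, hpb]
    have ht' : t ^ (N - p.1) * t ^ (n - p.2) = t ^ (N + n - b) := by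
      rw [← pow_add]
      congr 1
      omega
    calc (N.choose p.1 : ℝ) * ε ^ p.1 * t ^ (N - p.1) *
          ((N.choose (q + 1 + p.2) : ℝ) * ε ^ p.2 * t ^ (n - p.2))
        = (N.choose p.1 : ℝ) * (N.choose (q + 1 + p.2) : ℝ) *
            ((ε ^ p.1 * ε ^ p.2) * (t ^ (N - p.1) * t ^ (n - p.2))) := by ring
      _ = _ := by rw [he, ht']
  rw [hinner]
  have hfib := fiber_bound N q n b hN
  have hfib' : ((∑ p ∈ (Finset.range q ×ˢ Finset.range (n + 1)).filter
        (fun p => p.1 + p.2 = b),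
      N.choose p.1 * N.choose (q + 1 + p.2) : ℕ) : ℝ)
      ≤ (N : ℝ) * (N.choose q : ℝ) * ((N - 1).choose b : ℝ) := by
    exact_mod_cast hfib
  exact mul_le_mul_of_nonneg_right hfib' (by positivity)

/-- (Remark 3, tightness of the a priori guarantee.) For all `1 ≤ q ≤ N` and
every `β ∈ (0,1)`, the value `ε_{N,β}(q)` satisfies
`Σ_{m=0}^{q−1} C(N,m) ε_{N,β}(q)^m (1 − ε_{N,β}(q))^{N−m} ≤ β`; consequently,
every `ε` that is the smallest value in `(0,1)` satisfying
`Σ_{m=0}^{q−1} C(N,m) ε^m (1−ε)^{N−m} ≤ β` satisfies `ε ≤ ε_{N,β}(q)`. -/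
theorem stmt_12 (N q : ℕ) (hq : 1 ≤ q) (hqN : q ≤ N)
    (β : ℝ) (hβ : β ∈ Set.Ioo (0 : ℝ) 1)
    (t : ℕ → ℝ)
    (ht : ∀ k < N, t k ∈ Set.Icc (0 : ℝ) 1 ∧ scenPoly N β k (t k) = 0)
    (epsq : ℝ)
    (hepsq : epsq = if q = N then 1 else 1 - t q) :
    (∑ m ∈ Finset.range q, (N.choose m : ℝ) * epsq ^ m * (1 - epsq) ^ (N - m) ≤ β)
      ∧ ∀ ε : ℝ,
        IsLeast {e : ℝ | e ∈ Set.Ioo (0 : ℝ) 1 ∧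
            ∑ m ∈ Finset.range q, (N.choose m : ℝ) * e ^ m * (1 - e) ^ (N - m) ≤ β} ε →
        ε ≤ epsq := by
  obtain ⟨hβ0, hβ1⟩ := hβ
  subst hepsq
  by_cases hqN' : q = N
  · -- q = N : epsq = 1
    rw [if_pos hqN']
    have h0 : ∑ m ∈ Finset.range q, (N.choose m : ℝ) * (1:ℝ) ^ m * (1 - 1) ^ (N - m) = 0 := by
      refine Finset.sum_eq_zero fun m hm => ?_
      have hm' : m < q := Finset.mem_range.mp hm
      rw [sub_self, zero_pow (by omega)]
      ring
    refine ⟨by rw [h0]; exact hβ0.le, fun ε hε => ?_⟩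
    exact (hε.1.1.2).le
  · -- q < N
    rw [if_neg hqN']
    have hqlt : q < N := lt_of_le_of_ne hqN hqN'
    obtain ⟨⟨ht0, ht1⟩, hroot⟩ := ht q hqlt
    set t0 := t q with ht0def
    set n := N - q - 1 with hndef
    have hN : N = q + n + 1 := by omega
    have hε0 : (0:ℝ) ≤ 1 - t0 := by linarith
    have hεt : (1 - t0) + t0 = 1 := by ring
    -- H and its positivity
    set H := ∑ m ∈ Finset.Ico q N, (m.choose q : ℝ) * t0 ^ (m - q) with hHdef
    have hH1 : (1:ℝ) ≤ H := by
      have hmem : q ∈ Finset.Ico q N := Finset.mem_Ico.mpr ⟨le_refl q, hqlt⟩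
      have := Finset.single_le_sum (f := fun m => (m.choose q : ℝ) * t0 ^ (m - q))
        (fun i _ => by positivity) hmem
      simpa using this
    -- root equation
    have hNpos : (0:ℝ) < N := by exact_mod_cast (show 0 < N by omega)
    have hNne : (N:ℝ) ≠ 0 := ne_of_gt hNpos
    have hroot' : β * H = (N:ℝ) * (N.choose q : ℝ) * t0 ^ (n + 1) := by
      have h1 : (β / N) * H = (N.choose q : ℝ) * t0 ^ (N - q) := by
        have h := hroot
        simp only [scenPoly, ← hHdef] at h
        rw [sub_eq_zero] at h
        exact h
      have h2 : N - q = n + 1 := by omega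
      rw [h2] at h1
      calc β * H = (N:ℝ) * ((β / N) * H) := by field_simp
        _ = (N:ℝ) * ((N.choose q : ℝ) * t0 ^ (n + 1)) := by rw [h1]
        _ = (N:ℝ) * (N.choose q : ℝ) * t0 ^ (n + 1) := by ring
    -- identity for H
    have hHident : H = ∑ i ∈ Finset.range (n + 1),
        (N.choose (q + 1 + i) : ℝ) * (1 - t0) ^ i * t0 ^ (n - i) := by
      rw [hHdef, Finset.sum_Ico_eq_sum_range]
      have h2 : N - q = n + 1 := by omega
      rw [h2]
      have h3 := ident q t0 n
      have h4 : q + 1 + n = N := by omega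
      rw [h4] at h3
      simpa using h3
    -- main bound
    have hsum0 : (0:ℝ) ≤ 1 - (1 - t0) := by linarith
    have hmain : ∑ m ∈ Finset.range q,
        (N.choose m : ℝ) * (1 - t0) ^ m * (1 - (1 - t0)) ^ (N - m) ≤ β := by
      have heq : (1 : ℝ) - (1 - t0) = t0 := by ring
      rw [heq]
      have hkey : (∑ m ∈ Finset.range q, (N.choose m : ℝ) * (1 - t0) ^ m * t0 ^ (N - m)) * H
          ≤ β * H := by
        rw [hroot', hHident]
        exact key_ineq N q n hN (1 - t0) t0 hε0 ht0 hεt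
      have hHpos : (0:ℝ) < H := by linarith
      exact le_of_mul_le_mul_right hkey hHpos
    refine ⟨hmain, fun ε hε => ?_⟩
    -- t0 < 1
    have ht0lt1 : t0 < 1 := by
      rcases lt_or_eq_of_le ht1 with h | h
      · exact h
      · exfalso
        have hH1' : H = (N.choose (q + 1) : ℝ) := by
          rw [hHident, h]
          rw [Finset.sum_eq_single_of_mem 0 (Finset.mem_range.mpr (by omega))]
          · simp
          · intro i _ hi
            rw [sub_self, zero_pow hi]
            ring
        rw [hH1', h] at hroot'
        simp only [one_pow, mul_one] at hroot'
        have hle : (N.choose (q + 1) : ℕ) ≤ N * N.choose q := by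
          calc N.choose (q + 1) ≤ N.choose (q + 1) * (q + 1) :=
                Nat.le_mul_of_pos_right _ (by omega)
            _ = N.choose q * (N - q) := Nat.choose_succ_right_eq N q
            _ ≤ N.choose q * N := Nat.mul_le_mul_left _ (by omega)
            _ = N * N.choose q := Nat.mul_comm _ _
        have hle' : (N.choose (q + 1) : ℝ) ≤ (N:ℝ) * (N.choose q : ℝ) := by
          exact_mod_cast hle
        have hcpos : (0:ℝ) < (N.choose (q + 1) : ℝ) := by
          exact_mod_cast Nat.choose_pos (by omega : q + 1 ≤ N)
        nlinarith
    -- 0 < t0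
    have ht0pos : 0 < t0 := by
      rcases lt_or_eq_of_le ht0 with h | h
      · exact h
      · exfalso
        rw [← h] at hroot'
        rw [zero_pow (by omega : n + 1 ≠ 0)] at hroot'
        nlinarith
    exact hε.2 ⟨⟨by linarith, by linarith⟩, hmain⟩
end
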